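/- arXiv:1510.08807 — 2 statements merged into one kernel-verified Lean document; each statement's English description precedes it below -/
import Mathlib

section
/- Let p be a prime, d ≥ 2, and let x, y be coprime integers with p dividing x^m + y^m and p not dividing x, where m ≥ 1. Set c = x^m/(x^m + y^m) ∈ ℚ. If d does not divide v_p(x^m + y^m), then the polynomial f(z) = z^d + c has no preperiodic points in ℚ. -/
/-- If `p` is prime, `d ≥ 2`, `x, y` coprime integers with
`p ∣ x^m + y^m`, `p ∤ x`, and `d ∤ v_p(x^m + y^m)`, then
`f(z) = z^d + x^m/(x^m + y^m)` has no preperiodic points in `ℚ`. -/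
theorem no_rational_preperiodic_of_bad_valuation
    (p : ℕ) (hp : p.Prime) (d m : ℕ) (hd : 2 ≤ d) (hm : 1 ≤ m)
    (x y : ℤ) (hxy : IsCoprime x y)
    (hpdvd : (p : ℤ) ∣ x ^ m + y ^ m) (hpx : ¬ (p : ℤ) ∣ x)
    (hndvd : ¬ (d : ℤ) ∣ (padicValInt p (x ^ m + y ^ m) : ℤ)) :
    ∀ z : ℚ,
      ¬ ({w : ℚ | ∃ n : ℕ,
            (fun u : ℚ => u ^ d + (x : ℚ) ^ m / ((x : ℚ) ^ m + (y : ℚ) ^ m))^[n] z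
              = w}).Finite := by
  intro z hfin
  haveI : Fact p.Prime := ⟨hp⟩
  set f : ℚ → ℚ := fun u : ℚ => u ^ d + (x : ℚ) ^ m / ((x : ℚ) ^ m + (y : ℚ) ^ m) with hf
  set c : ℚ := (x : ℚ) ^ m / ((x : ℚ) ^ m + (y : ℚ) ^ m) with hc
  -- basic nonvanishing
  have hx0 : x ≠ 0 := by rintro rfl; exact hpx (dvd_zero _)
  have hS0 : x ^ m + y ^ m ≠ 0 := by
    intro h; rw [h] at hndvd; exact hndvd (by simp)
  have hxq : ((x : ℚ)) ^ m ≠ 0 := pow_ne_zero _ (by exact_mod_cast hx0)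
  have hSq : ((x : ℚ)) ^ m + (y : ℚ) ^ m ≠ 0 := by
    intro h
    apply hS0
    have : ((x ^ m + y ^ m : ℤ) : ℚ) = 0 := by push_cast; exact h
    exact_mod_cast this
  have hc0 : c ≠ 0 := div_ne_zero hxq hSq
  -- the valuation of c
  set V : ℕ := padicValInt p (x ^ m + y ^ m) with hV
  have hpxm : ¬ (p : ℤ) ∣ x ^ m := fun h => hpx ((Nat.prime_iff_prime_int.mp hp).dvd_of_dvd_pow h)
  have hvx : padicValRat p ((x : ℚ) ^ m) = 0 := by
    have : ((x : ℚ)) ^ m = ((x ^ m : ℤ) : ℚ) := by push_cast; ring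
    rw [this, padicValRat.of_int, padicValInt.eq_zero_of_not_dvd hpxm]; simp
  have hvS : padicValRat p ((x : ℚ) ^ m + (y : ℚ) ^ m) = (V : ℤ) := by
    have : ((x : ℚ)) ^ m + (y : ℚ) ^ m = ((x ^ m + y ^ m : ℤ) : ℚ) := by push_cast; ring
    rw [this, padicValRat.of_int]
  have hvc : padicValRat p c = -(V : ℤ) := by
    rw [hc, padicValRat.div hxq hSq, hvx, hvS, zero_sub]
  have hV1 : 1 ≤ V := by
    rw [hV, padicValInt]
    apply one_le_padicValNat_of_dvd
    · exact Int.natAbs_ne_zero.mpr hS0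
    · simpa using Int.natAbs_dvd_natAbs.mpr hpdvd
  have hvcneg : padicValRat p c < 0 := by
    rw [hvc]; simp only [Left.neg_neg_iff]; exact_mod_cast hV1
  have hndvd' : ¬ (d : ℤ) ∣ padicValRat p c := by
    rw [hvc, dvd_neg]; exact hndvd
  set vc : ℤ := padicValRat p c with hvcdef
  -- Lemma A: every image under f is nonzero with valuation ≤ vc
  have lemA : ∀ w : ℚ, f w ≠ 0 ∧ padicValRat p (f w) ≤ vc := by
    intro w
    by_cases hw : w = 0
    · have : f w = c := by simp [hf, hw, zero_pow (by omega : d ≠ 0)]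
      rw [this]; exact ⟨hc0, le_refl _⟩
    · have hwd : w ^ d ≠ 0 := pow_ne_zero _ hw
      have hvwd : padicValRat p (w ^ d) = d * padicValRat p w := padicValRat.pow w
      have hne : padicValRat p (w ^ d) ≠ padicValRat p c := by
        rw [hvwd]; intro h; exact hndvd' ⟨_, h.symm⟩
      have hsum : w ^ d + c ≠ 0 := by
        intro h
        have : w ^ d = -c := by linarith [h] <;> linear_combination h
        apply hne
        rw [this, padicValRat.neg]
      refine ⟨hsum, ?_⟩
      rw [show f w = w ^ d + c from rfl, padicValRat.add_eq_min hsum hwd hc0 hne]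
      exact min_le_right _ _
  -- Lemma B: if val w ≤ vc then val (f w) = d * val w
  have lemB : ∀ w : ℚ, w ≠ 0 → padicValRat p w ≤ vc →
      padicValRat p (f w) = d * padicValRat p w := by
    intro w hw hwv
    have hwd : w ^ d ≠ 0 := pow_ne_zero _ hw
    have hvwd : padicValRat p (w ^ d) = d * padicValRat p w := padicValRat.pow w
    have hwneg : padicValRat p w < 0 := lt_of_le_of_lt hwv hvcneg
    have hlt : padicValRat p (w ^ d) < padicValRat p c := by
      rw [hvwd]
      have h2 : (d : ℤ) * padicValRat p w ≤ 2 * padicValRat p w := by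
        have : (2 : ℤ) ≤ d := by exact_mod_cast hd
        nlinarith
      have : (2 : ℤ) * padicValRat p w < vc := by nlinarith
      exact lt_of_le_of_lt h2 this
    have hsum : w ^ d + c ≠ 0 := (lemA w).1
    rw [show f w = w ^ d + c from rfl, padicValRat.add_eq_of_lt hsum hwd hc0 hlt, hvwd]
  -- the orbit
  set a : ℕ → ℚ := fun n => f^[n] z with ha
  have hstep : ∀ n, a (n + 1) = f (a n) := fun n => Function.iterate_succ_apply' f n z
  have key : ∀ n, a (n + 1) ≠ 0 ∧ padicValRat p (a (n + 1)) ≤ vc := by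
    intro n
    induction n with
    | zero => rw [hstep]; exact lemA (a 0)
    | succ k ih =>
      obtain ⟨h0, hle⟩ := ih
      rw [hstep]
      refine ⟨(lemA (a (k + 1))).1, ?_⟩
      rw [lemB _ h0 hle]
      have hwneg : padicValRat p (a (k + 1)) < 0 := lt_of_le_of_lt hle hvcneg
      have : (2 : ℤ) ≤ d := by exact_mod_cast hd
      nlinarith
  have hdec : ∀ n, padicValRat p (a (n + 2)) < padicValRat p (a (n + 1)) := by
    intro n
    obtain ⟨h0, hle⟩ := key n
    have := lemB _ h0 hle
    rw [show n + 2 = (n + 1) + 1 from rfl, hstep, this]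
    have hwneg : padicValRat p (a (n + 1)) < 0 := lt_of_le_of_lt hle hvcneg
    have : (2 : ℤ) ≤ d := by exact_mod_cast hd
    nlinarith
  have hanti : StrictAnti (fun n => padicValRat p (a (n + 1))) :=
    strictAnti_nat_of_succ_lt fun n => hdec n
  have hinj : Function.Injective (fun n => a (n + 1)) := by
    intro i j hij
    by_contra hne
    rcases lt_or_gt_of_ne hne with h | h
    · exact absurd (congrArg (padicValRat p) hij) (ne_of_gt (hanti h))
    · exact absurd (congrArg (padicValRat p) hij) (ne_of_lt (hanti h))
  exact Set.infinite_of_injective_forall_mem hinj (fun n => show ∃ k, f^[k] z = a (n + 1) from ⟨n + 1, rfl⟩) hfin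
end

section
/- Let x, y be coprime nonzero integers, m ≥ 1, d ≥ 2, and suppose the polynomial f(z) = z^d + x^m/(x^m + y^m) has a preperiodic point in ℚ. Then x^m + y^m = ± w^d for some integer w. -/
lemma exists_pow_of_dvd_factorization {d n : ℕ} (hd : d ≠ 0) (hn : n ≠ 0)
    (h : ∀ p, d ∣ n.factorization p) : ∃ w : ℕ, n = w ^ d := by
  refine ⟨Nat.floorRoot d n, ?_⟩
  have hw : Nat.floorRoot d n ≠ 0 := Nat.floorRoot_ne_zero.2 ⟨hd, hn⟩
  refine Nat.eq_of_factorization_eq hn (pow_ne_zero _ hw) fun p => ?_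
  rw [Nat.factorization_pow, Finsupp.smul_apply, Nat.factorization_floorRoot,
    Finsupp.floorDiv_apply, Nat.floorDiv_eq_div, smul_eq_mul]
  exact (Nat.mul_div_cancel' (h p)).symm

lemma orbit_infinite_of_neg_val (p : ℕ) [hp : Fact p.Prime] (d : ℕ) (hd : 2 ≤ d)
    (c : ℚ) (hc : c ≠ 0) (hv : padicValRat p c < 0)
    (hnd : ¬ (d : ℤ) ∣ padicValRat p c) (z : ℚ) :
    {w : ℚ | ∃ n : ℕ, (fun u : ℚ => u ^ d + c)^[n] z = w}.Infinite := by
  set f : ℚ → ℚ := fun u : ℚ => u ^ d + c with hf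
  set v : ℤ := padicValRat p c with hvdef
  have hd2 : (2 : ℤ) ≤ (d : ℤ) := by exact_mod_cast hd
  -- basic step
  have step : ∀ w : ℚ, w ≠ 0 → (d : ℤ) * padicValRat p w < v →
      f w ≠ 0 ∧ padicValRat p (f w) = d * padicValRat p w := by
    intro w hw hlt
    have hwd : w ^ d ≠ 0 := pow_ne_zero _ hw
    have hval : padicValRat p (w ^ d) = d * padicValRat p w := padicValRat.pow w
    have hne : w ^ d + c ≠ 0 := by
      intro h0
      have hcw : c = -(w ^ d) := by linarith
      rw [hcw, padicValRat.neg, hval] at hvdef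
      omega
    refine ⟨hne, ?_⟩
    have := padicValRat.add_eq_of_lt (p := p) hne hwd hc (by rw [hval]; exact hlt)
    rw [hf]; simpa [hval] using this
  -- invariant
  have key : ∀ w : ℚ, w ≠ 0 → padicValRat p w < v →
      f w ≠ 0 ∧ padicValRat p (f w) < padicValRat p w ∧ padicValRat p (f w) < v := by
    intro w hw hwv
    have hw0 : padicValRat p w < 0 := hwv.trans hv
    have h2 : (d : ℤ) * padicValRat p w < padicValRat p w := by nlinarith
    obtain ⟨h1, h2'⟩ := step w hw (h2.trans hwv)
    exact ⟨h1, by rw [h2']; exact h2, by rw [h2']; exact h2.trans hwv⟩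
  have hfromv : ∀ w : ℚ, w ≠ 0 → padicValRat p w = v →
      f w ≠ 0 ∧ padicValRat p (f w) < v := by
    intro w hw hwv
    have hlt : (d : ℤ) * padicValRat p w < v := by rw [hwv]; nlinarith
    obtain ⟨h1, h2⟩ := step w hw hlt
    exact ⟨h1, by rw [h2, hwv]; nlinarith⟩
  have hQstep : ∀ w : ℚ, w ≠ 0 → padicValRat p w < v → f w ≠ 0 ∧ padicValRat p (f w) < v :=
    fun w hw h => ⟨(key w hw h).1, (key w hw h).2.2⟩
  have hit2 : f^[2] z = f (f z) := by
    rw [Function.iterate_succ_apply', Function.iterate_one]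
  -- reach the invariant in two steps
  have start : f^[2] z ≠ 0 ∧ padicValRat p (f^[2] z) < v := by
    rw [hit2]
    by_cases hz0 : z = 0
    · have hfz : f z = c := by simp [hf, hz0, zero_pow (show d ≠ 0 by omega)]
      exact hfromv (f z) (hfz ▸ hc) (by rw [hfz])
    · rcases lt_trichotomy (padicValRat p z) v with h | h | h
      · obtain ⟨h1, h2⟩ := hQstep z hz0 h
        exact hQstep _ h1 h2
      · obtain ⟨h1, h2⟩ := hfromv z hz0 h
        exact hQstep _ h1 h2
      · rcases lt_trichotomy ((d : ℤ) * padicValRat p z) v with h' | h' | h'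
        · obtain ⟨h1, h2⟩ := step z hz0 h'
          exact hQstep _ h1 (by rw [h2]; exact h')
        · exact absurd ⟨_, h'.symm⟩ hnd
        · have hzd : z ^ d ≠ 0 := pow_ne_zero _ hz0
          have hvp : padicValRat p (z ^ d) = d * padicValRat p z := padicValRat.pow z
          have hne : z ^ d + c ≠ 0 := by
            intro h0
            have hcw : c = -(z ^ d) := by linarith
            rw [hcw, padicValRat.neg, hvp] at hvdef
            omega
          have hval : padicValRat p (f z) = v := by
            show padicValRat p (z ^ d + c) = v
            rw [add_comm]
            exact padicValRat.add_eq_of_lt (p := p) (by rwa [add_comm]) hc hzd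
              (by rw [hvp]; exact h')
          exact hfromv _ hne hval
  have hQ : ∀ n : ℕ, f^[n + 2] z ≠ 0 ∧ padicValRat p (f^[n + 2] z) < v := by
    intro n
    induction n with
    | zero => exact start
    | succ n ih =>
      have e : f^[n + 1 + 2] z = f (f^[n + 2] z) := by
        rw [show n + 1 + 2 = (n + 2) + 1 from by omega, Function.iterate_succ_apply']
      rw [e]
      exact ⟨(key _ ih.1 ih.2).1, (key _ ih.1 ih.2).2.2⟩
  have anti : StrictAnti (fun n : ℕ => padicValRat p (f^[n + 2] z)) := by
    apply strictAnti_nat_of_succ_lt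
    intro n
    have e : f^[n + 1 + 2] z = f (f^[n + 2] z) := by
      rw [show n + 1 + 2 = (n + 2) + 1 from by omega, Function.iterate_succ_apply']
    rw [e]
    exact (key _ (hQ n).1 (hQ n).2).2.1
  have hinj : Function.Injective (fun n : ℕ => f^[n + 2] z) := by
    intro a b hab
    exact anti.injective (by simp only at hab ⊢; rw [hab])
  exact Set.infinite_of_injective_forall_mem hinj fun n => ⟨n + 2, rfl⟩

/-- If `x, y` are coprime nonzero integers, `m ≥ 1`, `d ≥ 2`, and
`f(z) = z^d + x^m/(x^m + y^m)` has a preperiodic point in `ℚ`, then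
`x^m + y^m = ±w^d` for some integer `w`. -/
theorem power_sum_of_preperiodic
    (x y : ℤ) (hx : x ≠ 0) (hy : y ≠ 0) (hxy : IsCoprime x y)
    (m d : ℕ) (hm : 1 ≤ m) (hd : 2 ≤ d)
    (hpre : ∃ z : ℚ,
      ({w : ℚ | ∃ n : ℕ,
          (fun u : ℚ => u ^ d + (x : ℚ) ^ m / ((x : ℚ) ^ m + (y : ℚ) ^ m))^[n] z
            = w}).Finite) :
    ∃ w : ℤ, x ^ m + y ^ m = w ^ d ∨ x ^ m + y ^ m = -(w ^ d) := by
  by_cases hN0 : x ^ m + y ^ m = 0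
  · exact ⟨0, Or.inl (by rw [hN0, zero_pow (show d ≠ 0 by omega)])⟩
  obtain ⟨z, hz⟩ := hpre
  set N : ℤ := x ^ m + y ^ m with hN
  have hNQ : (x : ℚ) ^ m + (y : ℚ) ^ m = (N : ℚ) := by rw [hN]; push_cast; ring
  have hNQ0 : (x : ℚ) ^ m + (y : ℚ) ^ m ≠ 0 := by
    rw [hNQ]; exact_mod_cast hN0
  have hxQ : (x : ℚ) ≠ 0 := Int.cast_ne_zero.2 hx
  set c : ℚ := (x : ℚ) ^ m / ((x : ℚ) ^ m + (y : ℚ) ^ m) with hc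
  have hc0 : c ≠ 0 := div_ne_zero (pow_ne_zero _ hxQ) hNQ0
  have hfac : ∀ p : ℕ, d ∣ N.natAbs.factorization p := by
    intro p
    by_cases hpp : p.Prime
    · by_cases hpd : p ∣ N.natAbs
      swap
      · simp [Nat.factorization_eq_zero_of_not_dvd hpd]
      haveI : Fact p.Prime := ⟨hpp⟩
      by_contra hnd
      have hpN : (p : ℤ) ∣ N :=
        dvd_trans (Int.natCast_dvd_natCast.2 hpd) (Int.natAbs_dvd.2 dvd_rfl)
      have hpx : ¬ (p : ℤ) ∣ x := by
        intro hpx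
        have hpy : (p : ℤ) ∣ y := by
          have hprime : Prime (p : ℤ) := Nat.prime_iff_prime_int.1 hpp
          refine hprime.dvd_of_dvd_pow (n := m) ?_
          have : (y : ℤ) ^ m = N - x ^ m := by rw [hN]; ring
          rw [this]
          exact dvd_sub hpN (dvd_pow hpx (by omega))
        exact (Nat.prime_iff_prime_int.1 hpp).not_unit (hxy.isUnit_of_dvd' hpx hpy)
      have hpxn : ¬ p ∣ x.natAbs := by
        intro h
        exact hpx (dvd_trans (Int.natCast_dvd_natCast.2 h) (Int.natAbs_dvd.2 dvd_rfl))
      have hvx : padicValRat p ((x : ℚ)) = 0 := by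
        rw [show ((x : ℚ)) = ((x : ℤ) : ℚ) from rfl, padicValRat.of_int]
        simp [padicValInt, padicValNat.eq_zero_of_not_dvd hpxn]
      have hvN : padicValRat p ((N : ℚ)) = (N.natAbs.factorization p : ℤ) := by
        rw [show ((N : ℚ)) = ((N : ℤ) : ℚ) from rfl, padicValRat.of_int]
        simp [padicValInt, Nat.factorization_def _ hpp]
      have hvc : padicValRat p c = -(N.natAbs.factorization p : ℤ) := by
        rw [hc, padicValRat.div (pow_ne_zero _ hxQ) hNQ0, hNQ,
          padicValRat.pow (x : ℚ), hvx, hvN]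
        ring
      have hkpos : 0 < N.natAbs.factorization p :=
        hpp.factorization_pos_of_dvd (Int.natAbs_ne_zero.2 hN0) hpd
      have hneg : padicValRat p c < 0 := by rw [hvc]; omega
      have hndvd : ¬ (d : ℤ) ∣ padicValRat p c := by
        rw [hvc, dvd_neg, Int.natCast_dvd_natCast]
        exact hnd
      exact orbit_infinite_of_neg_val p d hd c hc0 hneg hndvd z hz
    · simp [Nat.factorization_eq_zero_of_not_prime _ hpp]
  obtain ⟨w, hw⟩ := exists_pow_of_dvd_factorization (show d ≠ 0 by omega)
    (Int.natAbs_ne_zero.2 hN0) hfac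
  rcases Int.natAbs_eq N with h | h
  · exact ⟨(w : ℤ), Or.inl (by rw [h, hw]; push_cast; ring)⟩
  · exact ⟨(w : ℤ), Or.inr (by rw [h, hw]; push_cast; ring)⟩
end
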